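/- Let 𝒢 and 𝒦 be groupoids with 𝒢₀ finite, X a finite split (𝒢_α,𝒦_β)-set via α=(X_g,α_g)_{g∈𝒢} and β=(Y_k,β_k)_{k∈𝒦}, and A a unital 𝒢-graded algebra. Then there exists an action γ=(E_k,γ_k)_{k∈𝒦} of 𝒦 on the algebra A #_α^𝒢 X such that each ideal E_k = ⊕_{g∈𝒢} ⊕_{x ∈ Y_k ∩ X_{d(g)}} A_g δ_x is unital (with identity 𝟏_k = Σ_{e∈𝒢₀} Σ_{x∈Y_k∩X_e} 1_e δ_x), γ_k(a_g δ_y) = a_g δ_{β_k(y)} for y ∈ Y_{k⁻¹} ∩ X_{d(g)}, and A #_α^𝒢 X = ⊕_{p∈𝒦₀} E_p. -/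

import Mathlib

open scoped Classical

noncomputable section

universe u v w

/-- A groupoid, presented as a set of morphisms with partially defined
composition.  `s g` is the domain (source) identity `d(g)`, `t g` the range
(target) identity `r(g)`; `mul g h` is the composite `gh`, meaningful when
`s g = t h`. -/
structure Gpd (G : Type u) where
  s : G → G
  t : G → G
  inv : G → G
  mul : G → G → G
  s_s : ∀ g, s (s g) = s g
  t_s : ∀ g, t (s g) = s g
  s_t : ∀ g, s (t g) = t g
  t_t : ∀ g, t (t g) = t g
  s_mul : ∀ g h, s g = t h → s (mul g h) = s h
  t_mul : ∀ g h, s g = t h → t (mul g h) = t g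
  mul_assoc : ∀ g h l, s g = t h → s h = t l → mul (mul g h) l = mul g (mul h l)
  mul_src : ∀ g, mul g (s g) = g
  tgt_mul : ∀ g, mul (t g) g = g
  s_inv : ∀ g, s (inv g) = t g
  t_inv : ∀ g, t (inv g) = s g
  inv_mul : ∀ g, mul (inv g) g = s g
  mul_inv : ∀ g, mul g (inv g) = t g

namespace Gpd

variable {G : Type u}

/-- `e` is an object (identity) of the groupoid. -/
def obj (𝒢 : Gpd G) (e : G) : Prop := 𝒢.s e = e

/-- The set `𝒢₀` of objects of the groupoid. -/
def Objs (𝒢 : Gpd G) : Set G := {e | 𝒢.obj e}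

end Gpd

/-- An action `α = (X_g, α_g)` of a groupoid `𝒢` on a set `X`:
`car g` is the subset `X_g` and `act g` restricts to the bijection
`α_g : X_{g⁻¹} → X_g`. -/
structure GpdSetAction {G : Type u} (𝒢 : Gpd G) (X : Type v) where
  car : G → Set X
  act : G → X → X
  car_t : ∀ g, car g = car (𝒢.t g)
  bijOn : ∀ g, Set.BijOn (act g) (car (𝒢.inv g)) (car g)
  act_id : ∀ e, 𝒢.obj e → ∀ x ∈ car e, act e x = x
  act_mul : ∀ g h, 𝒢.s g = 𝒢.t h → ∀ x ∈ car (𝒢.inv h),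
    act g (act h x) = act (𝒢.mul g h) x

/-- `X` is a split `𝒢`-set: `X` is the disjoint union of the `X_e`, `e ∈ 𝒢₀`. -/
def GpdSetAction.Split {G : Type u} {𝒢 : Gpd G} {X : Type v} (α : GpdSetAction 𝒢 X) : Prop :=
  ∀ x : X, ∃! e : G, 𝒢.obj e ∧ x ∈ α.car e

/-- The action is fully faithful: if `α_g` fixes some `x ∈ X_g ∩ X_{g⁻¹}`
then `g` is an identity. -/
def GpdSetAction.FullyFaithful {G : Type u} {𝒢 : Gpd G} {X : Type v}
    (α : GpdSetAction 𝒢 X) : Prop :=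
  ∀ g x, x ∈ α.car g ∩ α.car (𝒢.inv g) → α.act g x = x → 𝒢.obj g

/-- A `𝒢`-grading of the `k`-algebra `A`:  `A = ⊕_{g ∈ 𝒢} A_g` with
`A_g A_h ⊆ A_{gh}` for composable `g, h` and `A_g A_h = 0` otherwise. -/
structure GpdGrading {G : Type u} (𝒢 : Gpd G) (k : Type v) (A : Type w)
    [Field k] [Ring A] [Algebra k A] where
  comp : G → Submodule k A
  internal : DirectSum.IsInternal comp
  mul_mem : ∀ g h, 𝒢.s g = 𝒢.t h → ∀ a ∈ comp g, ∀ b ∈ comp h, a * b ∈ comp (𝒢.mul g h)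
  mul_eq_zero : ∀ g h, 𝒢.s g ≠ 𝒢.t h → ∀ a ∈ comp g, ∀ b ∈ comp h, a * b = 0

/-- The homogeneous component of degree `g` of `a ∈ A`. -/
noncomputable def GpdGrading.proj {G : Type u} {𝒢 : Gpd G} {k : Type v} {A : Type w}
    [Field k] [Ring A] [Algebra k A] (𝒜 : GpdGrading 𝒢 k A) (g : G) (a : A) : A :=
  ((Equiv.ofBijective _ 𝒜.internal).symm a g : A)

/-- `one : G → A` is a family of local units for the grading: each `one e`
(`e ∈ 𝒢₀`) is an identity element of `A_e` and `1_A = Σ_{e ∈ 𝒢₀} 1_e`. -/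
def IsIdFamily {G : Type u} {𝒢 : Gpd G} {k : Type v} {A : Type w}
    [Field k] [Ring A] [Algebra k A] (𝒜 : GpdGrading 𝒢 k A) (one : G → A) : Prop :=
  (∀ e, 𝒢.obj e → one e ∈ 𝒜.comp e ∧ ∀ a ∈ 𝒜.comp e, one e * a = a ∧ a * one e = a) ∧
  (1 : A) = ∑ᶠ e ∈ 𝒢.Objs, one e

/-- The multiplication of the smash product `A #_α^𝒢 X`, defined on the
ambient space of formal sums `Σ a_{(g,x)} δ_{(g,x)}`:
`(a δ_{(g,x)}) (b δ_{(h,y)}) = (a b) δ_{(gh, y)}` when `d(g) = r(h)` and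
`α_h(y) = x`, and `0` otherwise. -/
noncomputable def smashMul {G : Type u} {𝒢 : Gpd G} {X : Type v} {A : Type w} [Ring A]
    (α : GpdSetAction 𝒢 X) (f₁ f₂ : (G × X) →₀ A) : (G × X) →₀ A :=
  f₁.sum fun p a => f₂.sum fun q b =>
    if 𝒢.s p.1 = 𝒢.t q.1 ∧ α.act q.1 q.2 = p.2
    then Finsupp.single (𝒢.mul p.1 q.1, q.2) (a * b) else 0

/-- The underlying set of the smash product `A #_α^𝒢 X = ⊕_{g} ⊕_{x ∈ X_{d(g)}} A_g δ_x`: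
those formal sums whose `(g,x)`-coefficient lies in `A_g`, supported on pairs
with `x ∈ X_{d(g)}`. -/
def smashSet {G : Type u} {𝒢 : Gpd G} {X : Type v} {k : Type*} {A : Type w}
    [Field k] [Ring A] [Algebra k A]
    (α : GpdSetAction 𝒢 X) (𝒜 : GpdGrading 𝒢 k A) : Set ((G × X) →₀ A) :=
  {f | ∀ p : G × X, f p ∈ 𝒜.comp p.1 ∧ (f p ≠ 0 → p.2 ∈ α.car (𝒢.s p.1))}

/-- The identity element `Σ_{e ∈ 𝒢₀} Σ_{x ∈ X_e} 1_e δ_x` of the smash product. -/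
noncomputable def smashOne {G : Type u} {𝒢 : Gpd G} {X : Type v} {A : Type w} [Ring A]
    (α : GpdSetAction 𝒢 X) (one : G → A) : (G × X) →₀ A :=
  ∑ᶠ e ∈ 𝒢.Objs, ∑ᶠ x ∈ α.car e, Finsupp.single ((e, x) : G × X) (one e)

/-- `X` is a `(𝒢_α, 𝒦_β)`-set:  each `Y_k` is `α`-invariant, each `X_g` is
`β`-invariant, and the two actions commute. -/
structure GKCompat {G : Type u} {K : Type*} {𝒢 : Gpd G} {𝒦 : Gpd K} {X : Type v}
    (α : GpdSetAction 𝒢 X) (β : GpdSetAction 𝒦 X) : Prop where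
  alpha_inv : ∀ g κ, α.act g '' (α.car (𝒢.inv g) ∩ β.car κ) ⊆ α.car g ∩ β.car κ
  beta_inv : ∀ g κ, β.act κ '' (α.car g ∩ β.car (𝒦.inv κ)) ⊆ α.car g ∩ β.car κ
  comm : ∀ g κ x, x ∈ α.car (𝒢.inv g) ∩ β.car (𝒦.inv κ) →
    α.act g (β.act κ x) = β.act κ (α.act g x)

/-- The ideal `E_k = A #^𝒢_{θ^k} Y_k = ⊕_g ⊕_{x ∈ Y_k ∩ X_{d(g)}} A_g δ_x`
of the smash product `A #_α^𝒢 X`. -/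
def Eset {G : Type u} {K : Type*} {𝒢 : Gpd G} {𝒦 : Gpd K} {X : Type v}
    {k : Type*} {A : Type w} [Field k] [Ring A] [Algebra k A]
    (α : GpdSetAction 𝒢 X) (β : GpdSetAction 𝒦 X) (𝒜 : GpdGrading 𝒢 k A)
    (κ : K) : Set ((G × X) →₀ A) :=
  {f | f ∈ smashSet α 𝒜 ∧ ∀ p : G × X, f p ≠ 0 → p.2 ∈ β.car κ}

/-- The map `γ_k : E_{k⁻¹} → E_k`, `γ_k(a_g δ_y) = a_g δ_{β_k(y)}`. -/
noncomputable def gammaAct {G : Type u} {K : Type*} {𝒦 : Gpd K} {X : Type v} {A : Type w}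
    [Ring A] (β : GpdSetAction 𝒦 X) (κ : K) (f : (G × X) →₀ A) : (G × X) →₀ A :=
  f.sum fun p a =>
    if p.2 ∈ β.car (𝒦.inv κ) then Finsupp.single ((p.1, β.act κ p.2) : G × X) a else 0

/-- The identity element `𝟏_k = Σ_{e ∈ 𝒢₀} Σ_{x ∈ Y_k ∩ X_e} 1_e δ_x` of `E_k`. -/
noncomputable def OneE {G : Type u} {K : Type*} {𝒢 : Gpd G} {𝒦 : Gpd K} {X : Type v}
    {A : Type w} [Ring A]
    (α : GpdSetAction 𝒢 X) (β : GpdSetAction 𝒦 X) (one : G → A) (κ : K) : (G × X) →₀ A :=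
  ∑ᶠ e ∈ 𝒢.Objs, ∑ᶠ x ∈ (β.car κ ∩ α.car e), Finsupp.single ((e, x) : G × X) (one e)

/-! ### Auxiliary lemmas -/

section Aux

variable {G : Type u} {K : Type*} {X : Type v} {k : Type*} {A : Type w}
variable [Field k] [Ring A] [Algebra k A]

lemma Gpd.t_obj {𝒢 : Gpd G} {e : G} (h : 𝒢.obj e) : 𝒢.t e = e := by
  have h' : 𝒢.s e = e := h
  calc 𝒢.t e = 𝒢.t (𝒢.s e) := by rw [h']
    _ = 𝒢.s e := 𝒢.t_s e
    _ = e := h'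

lemma car_inv_eq {𝒢 : Gpd G} (α : GpdSetAction 𝒢 X) (g : G) :
    α.car (𝒢.inv g) = α.car (𝒢.s g) := by
  rw [α.car_t (𝒢.inv g), 𝒢.t_inv]

lemma act_mem {𝒢 : Gpd G} (α : GpdSetAction 𝒢 X) {g : G} {x : X}
    (hx : x ∈ α.car (𝒢.s g)) : α.act g x ∈ α.car g :=
  (α.bijOn g).mapsTo (by rw [car_inv_eq]; exact hx)

lemma act_inv_act {𝒢 : Gpd G} (α : GpdSetAction 𝒢 X) {g : G} {x : X}
    (hx : x ∈ α.car (𝒢.s g)) : α.act (𝒢.inv g) (α.act g x) = x := by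
  have hx' : x ∈ α.car (𝒢.inv g) := by rw [car_inv_eq]; exact hx
  rw [α.act_mul (𝒢.inv g) g (𝒢.s_inv g) x hx', 𝒢.inv_mul g]
  exact α.act_id (𝒢.s g) (𝒢.s_s g) x hx

/-- The graded submodule of formal sums with coefficients in `M p.1`,
supported on pairs satisfying `P`. -/
def SM (M : G → Submodule k A) (P : G × X → Prop) : Submodule k ((G × X) →₀ A) where
  carrier := {f | ∀ p : G × X, f p ∈ M p.1 ∧ (f p ≠ 0 → P p)}
  add_mem' := by
    intro f g hf hg p
    refine ⟨by simpa using Submodule.add_mem _ (hf p).1 (hg p).1, fun hne => ?_⟩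
    by_cases h0 : f p = 0
    · refine (hg p).2 fun h0' => hne ?_
      simp [h0, h0']
    · exact (hf p).2 h0
  zero_mem' := by intro p; simp
  smul_mem' := by
    intro c f hf p
    refine ⟨by simpa using Submodule.smul_mem _ c (hf p).1, fun hne => (hf p).2 fun h0 => ?_⟩
    simp [h0] at hne
  
lemma single_mem_SM {M : G → Submodule k A} {P : G × X → Prop} {q : G × X} {a : A}
    (h1 : a ∈ M q.1) (h2 : a ≠ 0 → P q) : Finsupp.single q a ∈ SM M P := by
  intro p
  rw [Finsupp.single_apply]
  split_ifs with h
  · exact ⟨h ▸ h1, fun hne => h ▸ h2 hne⟩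
  · exact ⟨Submodule.zero_mem _, fun hne => absurd rfl hne⟩

lemma Eset_eq {𝒢 : Gpd G} {𝒦 : Gpd K} (α : GpdSetAction 𝒢 X) (β : GpdSetAction 𝒦 X)
    (𝒜 : GpdGrading 𝒢 k A) (κ : K) :
    Eset α β 𝒜 κ =
      ↑(SM 𝒜.comp fun p : G × X => p.2 ∈ α.car (𝒢.s p.1) ∧ p.2 ∈ β.car κ) := by
  ext f
  constructor
  · rintro ⟨hs, hb⟩ p
    exact ⟨(hs p).1, fun hne => ⟨(hs p).2 hne, hb p hne⟩⟩
  · intro hf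
    exact ⟨fun p => ⟨(hf p).1, fun hne => ((hf p).2 hne).1⟩, fun p hne => ((hf p).2 hne).2⟩

lemma Eset_congr {𝒢 : Gpd G} {𝒦 : Gpd K} (α : GpdSetAction 𝒢 X) (β : GpdSetAction 𝒦 X)
    (𝒜 : GpdGrading 𝒢 k A) {κ κ' : K} (h : β.car κ = β.car κ') :
    Eset α β 𝒜 κ = Eset α β 𝒜 κ' := by
  unfold Eset; rw [h]

/-! #### `smashMul` lemmas -/

lemma iteAddZero {M : Type*} [AddZeroClass M] (c : Prop) [Decidable c] (x y : M) :
    (if c then x + y else 0) = (if c then x else 0) + (if c then y else 0) := by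
  split_ifs <;> simp

lemma smashMul_single_left {𝒢 : Gpd G} (α : GpdSetAction 𝒢 X) (u : G × X) (a : A)
    (f : (G × X) →₀ A) :
    smashMul α (Finsupp.single u a) f
      = f.sum fun q b => if 𝒢.s u.1 = 𝒢.t q.1 ∧ α.act q.1 q.2 = u.2
          then Finsupp.single (𝒢.mul u.1 q.1, q.2) (a * b) else 0 := by
  unfold smashMul
  apply Finsupp.sum_single_index
  simp only [zero_mul, Finsupp.single_zero, ite_self, Finsupp.sum, Finset.sum_const_zero]

lemma smashMul_single_right {𝒢 : Gpd G} (α : GpdSetAction 𝒢 X) (f : (G × X) →₀ A)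
    (v : G × X) (b : A) :
    smashMul α f (Finsupp.single v b)
      = f.sum fun p a => if 𝒢.s p.1 = 𝒢.t v.1 ∧ α.act v.1 v.2 = p.2
          then Finsupp.single (𝒢.mul p.1 v.1, v.2) (a * b) else 0 := by
  unfold smashMul
  apply Finsupp.sum_congr
  intro p _
  apply Finsupp.sum_single_index
  simp only [mul_zero, Finsupp.single_zero, ite_self]

lemma smashMul_single_single {𝒢 : Gpd G} (α : GpdSetAction 𝒢 X) (u v : G × X) (a b : A) :
    smashMul α (Finsupp.single u a) (Finsupp.single v b)
      = if 𝒢.s u.1 = 𝒢.t v.1 ∧ α.act v.1 v.2 = u.2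
          then Finsupp.single (𝒢.mul u.1 v.1, v.2) (a * b) else 0 := by
  rw [smashMul_single_left]
  apply Finsupp.sum_single_index
  simp only [mul_zero, Finsupp.single_zero, ite_self]

lemma smashMul_zero_left {𝒢 : Gpd G} (α : GpdSetAction 𝒢 X) (f : (G × X) →₀ A) :
    smashMul α 0 f = 0 := by
  unfold smashMul
  exact Finsupp.sum_zero_index

lemma smashMul_zero_right {𝒢 : Gpd G} (α : GpdSetAction 𝒢 X) (f : (G × X) →₀ A) :
    smashMul α f 0 = 0 := by
  unfold smashMul
  simp only [Finsupp.sum_zero_index, Finsupp.sum, Finsupp.support_zero, Finset.sum_empty,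
    Finset.sum_const_zero]

lemma smashMul_add_left {𝒢 : Gpd G} (α : GpdSetAction 𝒢 X) (f₁ f₂ g : (G × X) →₀ A) :
    smashMul α (f₁ + f₂) g = smashMul α f₁ g + smashMul α f₂ g := by
  unfold smashMul
  apply Finsupp.sum_add_index'
  · intro p
    simp only [zero_mul, Finsupp.single_zero, ite_self, Finsupp.sum, Finset.sum_const_zero]
  · intro p a₁ a₂
    rw [← Finsupp.sum_add]
    apply Finsupp.sum_congr
    intro q _
    rw [add_mul, Finsupp.single_add, iteAddZero]

lemma smashMul_add_right {𝒢 : Gpd G} (α : GpdSetAction 𝒢 X) (f g₁ g₂ : (G × X) →₀ A) :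
    smashMul α f (g₁ + g₂) = smashMul α f g₁ + smashMul α f g₂ := by
  unfold smashMul
  rw [← Finsupp.sum_add]
  apply Finsupp.sum_congr
  intro p _
  apply Finsupp.sum_add_index'
  · intro q
    simp only [mul_zero, Finsupp.single_zero, ite_self]
  · intro q b₁ b₂
    rw [mul_add, Finsupp.single_add, iteAddZero]

lemma smashMul_sum_left {𝒢 : Gpd G} (α : GpdSetAction 𝒢 X) {ι : Type*} (s : Finset ι)
    (F : ι → ((G × X) →₀ A)) (g : (G × X) →₀ A) :
    smashMul α (∑ i ∈ s, F i) g = ∑ i ∈ s, smashMul α (F i) g := by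
  classical
  induction s using Finset.induction_on with
  | empty => simpa using smashMul_zero_left α g
  | insert _ _ h ih =>
      rw [Finset.sum_insert h, Finset.sum_insert h, smashMul_add_left, ih]

lemma smashMul_sum_right {𝒢 : Gpd G} (α : GpdSetAction 𝒢 X) {ι : Type*} (s : Finset ι)
    (f : (G × X) →₀ A) (F : ι → ((G × X) →₀ A)) :
    smashMul α f (∑ i ∈ s, F i) = ∑ i ∈ s, smashMul α f (F i) := by
  classical
  induction s using Finset.induction_on with
  | empty => simpa using smashMul_zero_right α f
  | insert _ _ h ih =>
      rw [Finset.sum_insert h, Finset.sum_insert h, smashMul_add_right, ih]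

/-! #### `gammaAct` lemmas -/

lemma gammaAct_zero {𝒦 : Gpd K} (β : GpdSetAction 𝒦 X) (κ : K) :
    gammaAct β κ (0 : (G × X) →₀ A) = 0 := by
  unfold gammaAct
  exact Finsupp.sum_zero_index

lemma gammaAct_add {𝒦 : Gpd K} (β : GpdSetAction 𝒦 X) (κ : K) (f g : (G × X) →₀ A) :
    gammaAct β κ (f + g) = gammaAct β κ f + gammaAct β κ g := by
  unfold gammaAct
  apply Finsupp.sum_add_index'
  · intro p; simp only [Finsupp.single_zero, ite_self]
  · intro p a₁ a₂
    rw [Finsupp.single_add, iteAddZero]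

lemma gammaAct_single {𝒦 : Gpd K} (β : GpdSetAction 𝒦 X) (κ : K) (u : G × X) (a : A) :
    gammaAct β κ (Finsupp.single u a)
      = if u.2 ∈ β.car (𝒦.inv κ) then Finsupp.single (u.1, β.act κ u.2) a else 0 := by
  unfold gammaAct
  apply Finsupp.sum_single_index
  simp only [Finsupp.single_zero, ite_self]

lemma gammaAct_smul {𝒦 : Gpd K} (β : GpdSetAction 𝒦 X) (κ : K) (c : k)
    (f : (G × X) →₀ A) : gammaAct β κ (c • f) = c • gammaAct β κ f := by
  unfold gammaAct
  rw [Finsupp.sum_smul_index' (fun p => by simp only [Finsupp.single_zero, ite_self]),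
    Finsupp.smul_sum]
  apply Finsupp.sum_congr
  intro p _
  split_ifs <;> simp [Finsupp.smul_single]

lemma gammaAct_finset_sum {𝒦 : Gpd K} (β : GpdSetAction 𝒦 X) (κ : K) {ι : Type*}
    (s : Finset ι) (F : ι → ((G × X) →₀ A)) :
    gammaAct β κ (∑ i ∈ s, F i) = ∑ i ∈ s, gammaAct β κ (F i) := by
  classical
  induction s using Finset.induction_on with
  | empty => simpa using gammaAct_zero β κ
  | insert _ _ h ih =>
      rw [Finset.sum_insert h, Finset.sum_insert h, gammaAct_add, ih]

lemma finsupp_eq_sum_single (f : (G × X) →₀ A) :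
    f = ∑ p ∈ f.support, Finsupp.single p (f p) :=
  (Finsupp.sum_single f).symm

end Aux
section Aux2

variable {G : Type u} {K : Type*} {X : Type v} {k : Type*} {A : Type w}
variable [Field k] [Ring A] [Algebra k A]

lemma beta_forward {𝒢 : Gpd G} {𝒦 : Gpd K} {α : GpdSetAction 𝒢 X} {β : GpdSetAction 𝒦 X}
    (hc : GKCompat α β) (κ : K) {g : G} {x : X}
    (hx : x ∈ α.car (𝒢.s g)) (hβ : x ∈ β.car κ) : α.act g x ∈ β.car κ :=
  (hc.alpha_inv g κ ⟨x, ⟨by rw [car_inv_eq]; exact hx, hβ⟩, rfl⟩).2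

lemma beta_back {𝒢 : Gpd G} {𝒦 : Gpd K} {α : GpdSetAction 𝒢 X} {β : GpdSetAction 𝒦 X}
    (hc : GKCompat α β) (κ : K) {g : G} {x : X}
    (hx : x ∈ α.car (𝒢.s g)) (hβ : α.act g x ∈ β.car κ) : x ∈ β.car κ := by
  have h1 : α.act g x ∈ α.car (𝒢.s (𝒢.inv g)) := by
    rw [𝒢.s_inv, ← α.car_t]
    exact act_mem α hx
  have := beta_forward hc κ (g := 𝒢.inv g) h1 hβ
  rwa [act_inv_act α hx] at this

lemma one_comp_mul {𝒢 : Gpd G} (hG₀ : 𝒢.Objs.Finite) (𝒜 : GpdGrading 𝒢 k A)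
    {one : G → A} (hone : IsIdFamily 𝒜 one) (g : G) (b : A) (hb : b ∈ 𝒜.comp g) :
    one (𝒢.t g) * b = b := by
  have h1 : (1 : A) = ∑ e ∈ hG₀.toFinset, one e := by
    rw [hone.2, finsum_mem_eq_finite_toFinset_sum _ hG₀]
  have h2 : b = ∑ e ∈ hG₀.toFinset, one e * b := by
    rw [← Finset.sum_mul, ← h1, one_mul]
  rw [Finset.sum_eq_single_of_mem (𝒢.t g)
    (hG₀.mem_toFinset.2 (𝒢.s_t g)) ?_] at h2
  · exact h2.symm
  · intro e he hne
    have heo : 𝒢.s e = e := hG₀.mem_toFinset.1 he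
    exact 𝒜.mul_eq_zero e g (by rw [heo]; exact hne) (one e)
      (hone.1 e heo).1 b hb

lemma mul_comp_one {𝒢 : Gpd G} (hG₀ : 𝒢.Objs.Finite) (𝒜 : GpdGrading 𝒢 k A)
    {one : G → A} (hone : IsIdFamily 𝒜 one) (g : G) (b : A) (hb : b ∈ 𝒜.comp g) :
    b * one (𝒢.s g) = b := by
  have h1 : (1 : A) = ∑ e ∈ hG₀.toFinset, one e := by
    rw [hone.2, finsum_mem_eq_finite_toFinset_sum _ hG₀]
  have h2 : b = ∑ e ∈ hG₀.toFinset, b * one e := by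
    rw [← Finset.mul_sum, ← h1, mul_one]
  rw [Finset.sum_eq_single_of_mem (𝒢.s g)
    (hG₀.mem_toFinset.2 (𝒢.s_s g)) ?_] at h2
  · exact h2.symm
  · intro e he hne
    have heo : 𝒢.s e = e := hG₀.mem_toFinset.1 he
    have hte : 𝒢.t e = e := Gpd.t_obj heo
    exact 𝒜.mul_eq_zero g e (by rw [hte]; exact fun h => hne h.symm) b hb (one e)
      (hone.1 e heo).1

lemma OneE_eq {𝒢 : Gpd G} {𝒦 : Gpd K} [Finite X] (α : GpdSetAction 𝒢 X)
    (β : GpdSetAction 𝒦 X) (one : G → A) (hG₀ : 𝒢.Objs.Finite) (κ : K) :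
    OneE α β one κ = ∑ e ∈ hG₀.toFinset, ∑ x ∈ (β.car κ ∩ α.car e).toFinite.toFinset,
      Finsupp.single ((e, x) : G × X) (one e) := by
  unfold OneE
  rw [finsum_mem_eq_finite_toFinset_sum _ hG₀]
  apply Finset.sum_congr rfl
  intro e _
  rw [finsum_mem_eq_finite_toFinset_sum _ (Set.toFinite _)]

lemma gamma_comp {𝒦 : Gpd K} (β : GpdSetAction 𝒦 X) (κ l : K) (hkl : 𝒦.s κ = 𝒦.t l)
    (f : (G × X) →₀ A) (hf : ∀ q ∈ f.support, q.2 ∈ β.car (𝒦.inv l)) :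
    gammaAct β κ (gammaAct β l f) = gammaAct β (𝒦.mul κ l) f := by
  have h1 : gammaAct β l f = ∑ q ∈ f.support, Finsupp.single ((q.1, β.act l q.2) : G × X) (f q) := by
    unfold gammaAct
    rw [Finsupp.sum]
    exact Finset.sum_congr rfl fun q hq => if_pos (hf q hq)
  rw [h1, gammaAct_finset_sum]
  have h5 : gammaAct β (𝒦.mul κ l) f = ∑ q ∈ f.support,
      (if q.2 ∈ β.car (𝒦.inv (𝒦.mul κ l))
        then Finsupp.single ((q.1, β.act (𝒦.mul κ l) q.2) : G × X) (f q) else 0) := rfl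
  rw [h5]
  apply Finset.sum_congr rfl
  intro q hq
  have hql : q.2 ∈ β.car (𝒦.inv l) := hf q hq
  have h2 : β.act l q.2 ∈ β.car (𝒦.inv κ) := by
    rw [car_inv_eq, hkl, ← β.car_t]
    exact (β.bijOn l).mapsTo hql
  have h3 : q.2 ∈ β.car (𝒦.inv (𝒦.mul κ l)) := by
    rw [car_inv_eq, 𝒦.s_mul κ l hkl, ← car_inv_eq]
    exact hql
  rw [gammaAct_single, if_pos (show ((q.1, β.act l q.2) : G × X).2 ∈ β.car (𝒦.inv κ) from h2),
    if_pos (show q.2 ∈ β.car (𝒦.inv (𝒦.mul κ l)) from h3)]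
  have h4 : β.act κ (β.act l q.2) = β.act (𝒦.mul κ l) q.2 := β.act_mul κ l hkl q.2 hql
  show Finsupp.single ((q.1, β.act κ (β.act l q.2)) : G × X) (f q)
    = Finsupp.single ((q.1, β.act (𝒦.mul κ l) q.2) : G × X) (f q)
  rw [h4]

lemma gamma_obj_id {𝒦 : Gpd K} (β : GpdSetAction 𝒦 X) (p : K) (hp : 𝒦.obj p)
    (f : (G × X) →₀ A) (hf : ∀ q ∈ f.support, q.2 ∈ β.car p) :
    gammaAct β p f = f := by
  unfold gammaAct
  rw [Finsupp.sum]
  rw [Finset.sum_congr rfl (g := fun q => Finsupp.single q (f q)) ?_]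
  · exact Finsupp.sum_single f
  · intro q hq
    have hcar : q.2 ∈ β.car (𝒦.inv p) := by
      rw [car_inv_eq, show 𝒦.s p = p from hp]
      exact hf q hq
    rw [if_pos hcar, β.act_id p hp q.2 (hf q hq)]

lemma gamma_mul_single {𝒢 : Gpd G} {𝒦 : Gpd K} {α : GpdSetAction 𝒢 X}
    {β : GpdSetAction 𝒦 X} (hc : GKCompat α β) (κ : K) (p q : G × X) (a b : A)
    (hx : p.2 ∈ β.car (𝒦.inv κ)) (hy : q.2 ∈ β.car (𝒦.inv κ))
    (hyα : q.2 ∈ α.car (𝒢.s q.1)) :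
    gammaAct β κ (smashMul α (Finsupp.single p a) (Finsupp.single q b))
      = smashMul α (gammaAct β κ (Finsupp.single p a)) (gammaAct β κ (Finsupp.single q b)) := by
  rw [smashMul_single_single, gammaAct_single, gammaAct_single, if_pos hx, if_pos hy,
    smashMul_single_single]
  have hq2inv : q.2 ∈ α.car (𝒢.inv q.1) := by rw [car_inv_eq]; exact hyα
  have hcomm : α.act q.1 (β.act κ q.2) = β.act κ (α.act q.1 q.2) :=
    hc.comm q.1 κ q.2 ⟨hq2inv, hy⟩
  have hmemκ : α.act q.1 q.2 ∈ β.car (𝒦.inv κ) :=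
    (hc.alpha_inv q.1 (𝒦.inv κ) ⟨q.2, ⟨hq2inv, hy⟩, rfl⟩).2
  have hCiff : (𝒢.s ((p.1, β.act κ p.2) : G × X).1 = 𝒢.t ((q.1, β.act κ q.2) : G × X).1
        ∧ α.act ((q.1, β.act κ q.2) : G × X).1 ((q.1, β.act κ q.2) : G × X).2
          = ((p.1, β.act κ p.2) : G × X).2)
      ↔ (𝒢.s p.1 = 𝒢.t q.1 ∧ α.act q.1 q.2 = p.2) := by
    show (𝒢.s p.1 = 𝒢.t q.1 ∧ α.act q.1 (β.act κ q.2) = β.act κ p.2) ↔ _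
    constructor
    · rintro ⟨h1, h2⟩
      rw [hcomm] at h2
      exact ⟨h1, (β.bijOn κ).injOn hmemκ hx h2⟩
    · rintro ⟨h1, h2⟩
      exact ⟨h1, by rw [hcomm, h2]⟩
  rw [if_congr hCiff rfl rfl]
  split_ifs with h
  · rw [gammaAct_single, if_pos (show ((𝒢.mul p.1 q.1, q.2) : G × X).2 ∈ β.car (𝒦.inv κ) from hy)]
  · rw [gammaAct_zero]

end Aux2
/-- For a finite split `(𝒢_α, 𝒦_β)`-set `X` and a unital
`𝒢`-graded algebra `A` (with `𝒢₀` finite), the data `γ = (E_k, γ_k)_{k ∈ 𝒦}`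
is an action of the groupoid `𝒦` on the algebra `A #_α^𝒢 X`, each ideal `E_k`
is unital with identity `𝟏_k`, and `A #_α^𝒢 X = ⊕_{p ∈ 𝒦₀} E_p`. -/
theorem induced_groupoid_action_on_smash_product
    {G : Type u} {K : Type*} (𝒢 : Gpd G) (𝒦 : Gpd K) {X : Type v}
    (k : Type*) (A : Type w) [Field k] [Ring A] [Algebra k A] [Finite X]
    (hG₀ : 𝒢.Objs.Finite) (𝒜 : GpdGrading 𝒢 k A)
    (α : GpdSetAction 𝒢 X) (β : GpdSetAction 𝒦 X)
    (hsplitα : α.Split) (hsplitβ : β.Split) (hc : GKCompat α β)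
    (one : G → A) (hone : IsIdFamily 𝒜 one) :
    -- `E_k = E_{r(k)}`
    (∀ κ, Eset α β 𝒜 κ = Eset α β 𝒜 (𝒦.t κ)) ∧
    -- each `E_k` is a two-sided ideal of `A #_α^𝒢 X`
    (∀ κ, ∀ f ∈ Eset α β 𝒜 κ, ∀ h ∈ smashSet α 𝒜,
      smashMul α f h ∈ Eset α β 𝒜 κ ∧ smashMul α h f ∈ Eset α β 𝒜 κ) ∧
    -- each `E_k` is unital with identity `𝟏_k`
    (∀ κ, OneE α β one κ ∈ Eset α β 𝒜 κ ∧
      ∀ f ∈ Eset α β 𝒜 κ, smashMul α (OneE α β one κ) f = f ∧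
        smashMul α f (OneE α β one κ) = f) ∧
    -- `γ_k : E_{k⁻¹} → E_k` is a bijection
    (∀ κ, Set.BijOn (gammaAct β κ) (Eset α β 𝒜 (𝒦.inv κ)) (Eset α β 𝒜 κ)) ∧
    -- `γ_k` is an algebra homomorphism
    (∀ κ, ∀ f₁ ∈ Eset α β 𝒜 (𝒦.inv κ), ∀ f₂ ∈ Eset α β 𝒜 (𝒦.inv κ),
      gammaAct β κ (f₁ + f₂) = gammaAct β κ f₁ + gammaAct β κ f₂ ∧
      gammaAct β κ (smashMul α f₁ f₂) = smashMul α (gammaAct β κ f₁) (gammaAct β κ f₂)) ∧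
    (∀ (c : k) (κ : K), ∀ f ∈ Eset α β 𝒜 (𝒦.inv κ),
      gammaAct β κ (c • f) = c • gammaAct β κ f) ∧
    -- `γ_p` is the identity for `p ∈ 𝒦₀`
    (∀ p, 𝒦.obj p → ∀ f ∈ Eset α β 𝒜 p, gammaAct β p f = f) ∧
    -- `γ_k ∘ γ_l = γ_{kl}` for composable `k, l`
    (∀ κ l, 𝒦.s κ = 𝒦.t l → ∀ f ∈ Eset α β 𝒜 (𝒦.inv (𝒦.mul κ l)),
      gammaAct β κ (gammaAct β l f) = gammaAct β (𝒦.mul κ l) f) ∧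
    -- `γ_k (a_g δ_y) = a_g δ_{β_k(y)}`
    (∀ κ g, ∀ a ∈ 𝒜.comp g, ∀ y ∈ β.car (𝒦.inv κ),
      gammaAct β κ (Finsupp.single ((g, y) : G × X) a)
        = Finsupp.single ((g, β.act κ y) : G × X) a) ∧
    -- `A #_α^𝒢 X = ⊕_{p ∈ 𝒦₀} E_p`
    (∀ f ∈ smashSet α 𝒜, ∃! c : K → ((G × X) →₀ A),
      (Function.support c).Finite ∧
      (∀ p, 𝒦.obj p → c p ∈ Eset α β 𝒜 p) ∧
      (∀ p, ¬ 𝒦.obj p → c p = 0) ∧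
      f = ∑ᶠ p, c p) := by
  classical
  -- Part 1 : `E_k = E_{r(k)}`
  have part1 : ∀ κ, Eset α β 𝒜 κ = Eset α β 𝒜 (𝒦.t κ) :=
    fun κ => Eset_congr α β 𝒜 (β.car_t κ)
  -- Part 2 : each `E_k` is a two-sided ideal
  have part2 : ∀ κ, ∀ f ∈ Eset α β 𝒜 κ, ∀ h ∈ smashSet α 𝒜,
      smashMul α f h ∈ Eset α β 𝒜 κ ∧ smashMul α h f ∈ Eset α β 𝒜 κ := by
    intro κ f hf h hh
    obtain ⟨hfs, hfβ⟩ := hf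
    constructor
    · rw [Eset_eq α β 𝒜 κ, SetLike.mem_coe]
      unfold smashMul
      rw [Finsupp.sum]
      apply Submodule.sum_mem
      intro p _
      rw [Finsupp.sum]
      apply Submodule.sum_mem
      intro q _
      split_ifs with hcond
      · obtain ⟨h1, h2⟩ := hcond
        apply single_mem_SM
        · exact 𝒜.mul_mem p.1 q.1 h1 _ (hfs p).1 _ (hh q).1
        · intro hne
          have hbne : h q ≠ 0 := right_ne_zero_of_mul hne
          have hane : f p ≠ 0 := left_ne_zero_of_mul hne
          have hqα : q.2 ∈ α.car (𝒢.s q.1) := (hh q).2 hbne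
          refine ⟨by rw [𝒢.s_mul p.1 q.1 h1]; exact hqα, ?_⟩
          apply beta_back hc κ hqα
          rw [h2]
          exact hfβ p hane
      · exact Submodule.zero_mem _
    · rw [Eset_eq α β 𝒜 κ, SetLike.mem_coe]
      unfold smashMul
      rw [Finsupp.sum]
      apply Submodule.sum_mem
      intro p _
      rw [Finsupp.sum]
      apply Submodule.sum_mem
      intro q _
      split_ifs with hcond
      · obtain ⟨h1, h2⟩ := hcond
        apply single_mem_SM
        · exact 𝒜.mul_mem p.1 q.1 h1 _ (hh p).1 _ (hfs q).1
        · intro hne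
          have hbne : f q ≠ 0 := right_ne_zero_of_mul hne
          have hqα : q.2 ∈ α.car (𝒢.s q.1) := (hfs q).2 hbne
          exact ⟨by rw [𝒢.s_mul p.1 q.1 h1]; exact hqα, hfβ q hbne⟩
      · exact Submodule.zero_mem _
  -- Part 3 : each `E_k` is unital with identity `𝟏_k`
  have part3 : ∀ κ, OneE α β one κ ∈ Eset α β 𝒜 κ ∧
      ∀ f ∈ Eset α β 𝒜 κ, smashMul α (OneE α β one κ) f = f ∧
        smashMul α f (OneE α β one κ) = f := by
    intro κ
    constructor
    · rw [Eset_eq α β 𝒜 κ, SetLike.mem_coe, OneE_eq α β one hG₀ κ]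
      apply Submodule.sum_mem
      intro e he
      apply Submodule.sum_mem
      intro x hx
      have heo : 𝒢.s e = e := hG₀.mem_toFinset.1 he
      have hx' : x ∈ β.car κ ∩ α.car e := (Set.Finite.mem_toFinset _).1 hx
      apply single_mem_SM
      · exact (hone.1 e heo).1
      · intro _
        exact ⟨show x ∈ α.car (𝒢.s e) by rw [heo]; exact hx'.2, hx'.1⟩
    · intro f hf
      obtain ⟨hfs, hfβ⟩ := hf
      constructor
      · -- left identity
        rw [OneE_eq α β one hG₀ κ, smashMul_sum_left]
        calc
          ∑ e ∈ hG₀.toFinset, smashMul α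
              (∑ x ∈ (β.car κ ∩ α.car e).toFinite.toFinset,
                Finsupp.single ((e, x) : G × X) (one e)) f
            = ∑ e ∈ hG₀.toFinset, ∑ x ∈ (β.car κ ∩ α.car e).toFinite.toFinset,
                ∑ q ∈ f.support,
                  (if 𝒢.s e = 𝒢.t q.1 ∧ α.act q.1 q.2 = x
                    then Finsupp.single ((𝒢.mul e q.1, q.2) : G × X) (one e * f q) else 0) := by
              apply Finset.sum_congr rfl
              intro e _
              rw [smashMul_sum_left]
              apply Finset.sum_congr rfl
              intro x _
              rw [smashMul_single_left, Finsupp.sum]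
          _ = ∑ q ∈ f.support, ∑ e ∈ hG₀.toFinset,
                ∑ x ∈ (β.car κ ∩ α.car e).toFinite.toFinset,
                  (if 𝒢.s e = 𝒢.t q.1 ∧ α.act q.1 q.2 = x
                    then Finsupp.single ((𝒢.mul e q.1, q.2) : G × X) (one e * f q) else 0) := by
              rw [Finset.sum_comm]
              apply Finset.sum_congr rfl
              intro q _
              exact Finset.sum_comm
          _ = ∑ q ∈ f.support, Finsupp.single q (f q) := by
              apply Finset.sum_congr rfl
              intro q hq
              have hfq : f q ≠ 0 := Finsupp.mem_support_iff.1 hq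
              have hα : q.2 ∈ α.car (𝒢.s q.1) := (hfs q).2 hfq
              have hβq : q.2 ∈ β.car κ := hfβ q hfq
              have hx₀α : α.act q.1 q.2 ∈ α.car (𝒢.t q.1) := by
                rw [← α.car_t]; exact act_mem α hα
              have hx₀β : α.act q.1 q.2 ∈ β.car κ := beta_forward hc κ hα hβq
              rw [Finset.sum_eq_single_of_mem (𝒢.t q.1)
                (hG₀.mem_toFinset.2 (𝒢.s_t q.1)) ?_]
              · have hrw : ∀ x ∈ (β.car κ ∩ α.car (𝒢.t q.1)).toFinite.toFinset,
                    (if 𝒢.s (𝒢.t q.1) = 𝒢.t q.1 ∧ α.act q.1 q.2 = x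
                      then Finsupp.single ((𝒢.mul (𝒢.t q.1) q.1, q.2) : G × X)
                        (one (𝒢.t q.1) * f q) else 0)
                    = (if α.act q.1 q.2 = x then Finsupp.single q (f q) else 0) := by
                  intro x _
                  rw [𝒢.tgt_mul q.1, one_comp_mul hG₀ 𝒜 hone q.1 (f q) (hfs q).1]
                  exact if_congr (by rw [𝒢.s_t q.1]; exact and_iff_right rfl) rfl rfl
                rw [Finset.sum_congr rfl hrw, Finset.sum_ite_eq,
                  if_pos ((Set.Finite.mem_toFinset _).2 (Set.mem_inter hx₀β hx₀α))]
              · intro e he hne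
                apply Finset.sum_eq_zero
                intro x _
                have hC : ¬ (𝒢.s e = 𝒢.t q.1 ∧ α.act q.1 q.2 = x) := by
                  rintro ⟨h1, -⟩
                  exact hne ((hG₀.mem_toFinset.1 he) ▸ h1)
                exact if_neg hC
          _ = f := Finsupp.sum_single f
      · -- right identity
        rw [OneE_eq α β one hG₀ κ, smashMul_sum_right]
        calc
          ∑ e ∈ hG₀.toFinset, smashMul α f
              (∑ x ∈ (β.car κ ∩ α.car e).toFinite.toFinset,
                Finsupp.single ((e, x) : G × X) (one e))
            = ∑ e ∈ hG₀.toFinset, ∑ x ∈ (β.car κ ∩ α.car e).toFinite.toFinset,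
                ∑ p ∈ f.support,
                  (if 𝒢.s p.1 = 𝒢.t e ∧ α.act e x = p.2
                    then Finsupp.single ((𝒢.mul p.1 e, x) : G × X) (f p * one e) else 0) := by
              apply Finset.sum_congr rfl
              intro e _
              rw [smashMul_sum_right]
              apply Finset.sum_congr rfl
              intro x _
              rw [smashMul_single_right, Finsupp.sum]
          _ = ∑ p ∈ f.support, ∑ e ∈ hG₀.toFinset,
                ∑ x ∈ (β.car κ ∩ α.car e).toFinite.toFinset,
                  (if 𝒢.s p.1 = 𝒢.t e ∧ α.act e x = p.2
                    then Finsupp.single ((𝒢.mul p.1 e, x) : G × X) (f p * one e) else 0) := by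
              rw [Finset.sum_comm]
              apply Finset.sum_congr rfl
              intro p _
              exact Finset.sum_comm
          _ = ∑ p ∈ f.support, Finsupp.single p (f p) := by
              apply Finset.sum_congr rfl
              intro p hp
              have hfp : f p ≠ 0 := Finsupp.mem_support_iff.1 hp
              have hα : p.2 ∈ α.car (𝒢.s p.1) := (hfs p).2 hfp
              have hβp : p.2 ∈ β.car κ := hfβ p hfp
              rw [Finset.sum_eq_single_of_mem (𝒢.s p.1)
                (hG₀.mem_toFinset.2 (𝒢.s_s p.1)) ?_]
              · have hrw : ∀ x ∈ (β.car κ ∩ α.car (𝒢.s p.1)).toFinite.toFinset,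
                    (if 𝒢.s p.1 = 𝒢.t (𝒢.s p.1) ∧ α.act (𝒢.s p.1) x = p.2
                      then Finsupp.single ((𝒢.mul p.1 (𝒢.s p.1), x) : G × X)
                        (f p * one (𝒢.s p.1)) else 0)
                    = (if x = p.2 then Finsupp.single ((p.1, x) : G × X) (f p) else 0) := by
                  intro x hx
                  have hxm : x ∈ β.car κ ∩ α.car (𝒢.s p.1) := (Set.Finite.mem_toFinset _).1 hx
                  have hact : α.act (𝒢.s p.1) x = x := α.act_id _ (𝒢.s_s p.1) x hxm.2
                  rw [𝒢.mul_src p.1, mul_comp_one hG₀ 𝒜 hone p.1 (f p) (hfs p).1, hact]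
                  exact if_congr (by rw [𝒢.t_s p.1]; exact and_iff_right rfl) rfl rfl
                rw [Finset.sum_congr rfl hrw, Finset.sum_ite_eq',
                  if_pos ((Set.Finite.mem_toFinset _).2 (Set.mem_inter hβp hα))]
              · intro e he hne
                apply Finset.sum_eq_zero
                intro x _
                have hC : ¬ (𝒢.s p.1 = 𝒢.t e ∧ α.act e x = p.2) := by
                  rintro ⟨h1, -⟩
                  exact hne ((Gpd.t_obj (hG₀.mem_toFinset.1 he)) ▸ h1).symm
                exact if_neg hC
          _ = f := Finsupp.sum_single f
  -- MapsTo for `γ_k`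
  have hMaps : ∀ κ, Set.MapsTo (gammaAct β κ) (Eset α β 𝒜 (𝒦.inv κ)) (Eset α β 𝒜 κ) := by
    intro κ f hf
    obtain ⟨hfs, hfβ⟩ := hf
    show gammaAct β κ f ∈ Eset α β 𝒜 κ
    rw [Eset_eq α β 𝒜 κ, SetLike.mem_coe]
    unfold gammaAct
    rw [Finsupp.sum]
    apply Submodule.sum_mem
    intro q hq
    have hfq : f q ≠ 0 := Finsupp.mem_support_iff.1 hq
    rw [if_pos (hfβ q hfq)]
    apply single_mem_SM
    · exact (hfs q).1
    · intro _
      have hmem := hc.beta_inv (𝒢.s q.1) κ ⟨q.2, ⟨(hfs q).2 hfq, hfβ q hfq⟩, rfl⟩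
      exact ⟨hmem.1, hmem.2⟩
  -- Part 4 : `γ_k` is a bijection `E_{k⁻¹} → E_k`
  have part4 : ∀ κ, Set.BijOn (gammaAct β κ) (Eset α β 𝒜 (𝒦.inv κ)) (Eset α β 𝒜 κ) := by
    intro κ
    have hinv1 : β.car (𝒦.inv (𝒦.inv κ)) = β.car κ := by
      rw [car_inv_eq, 𝒦.s_inv, ← β.car_t]
    have hleft : ∀ f ∈ Eset α β 𝒜 (𝒦.inv κ), gammaAct β (𝒦.inv κ) (gammaAct β κ f) = f := by
      intro f hf
      rw [gamma_comp β (𝒦.inv κ) κ (𝒦.s_inv κ) f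
        (fun q hq => hf.2 q (Finsupp.mem_support_iff.1 hq)), 𝒦.inv_mul κ]
      exact gamma_obj_id β (𝒦.s κ) (𝒦.s_s κ) f (fun q hq => by
        rw [← car_inv_eq β κ]; exact hf.2 q (Finsupp.mem_support_iff.1 hq))
    have hright : ∀ h ∈ Eset α β 𝒜 κ, gammaAct β κ (gammaAct β (𝒦.inv κ) h) = h := by
      intro h hh
      have hsupp : ∀ q ∈ h.support, q.2 ∈ β.car (𝒦.inv (𝒦.inv κ)) := fun q hq => by
        rw [hinv1]; exact hh.2 q (Finsupp.mem_support_iff.1 hq)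
      rw [gamma_comp β κ (𝒦.inv κ) (𝒦.t_inv κ).symm h hsupp, 𝒦.mul_inv κ]
      exact gamma_obj_id β (𝒦.t κ) (𝒦.s_t κ) h (fun q hq => by
        rw [← β.car_t]; exact hh.2 q (Finsupp.mem_support_iff.1 hq))
    refine ⟨hMaps κ, ?_, ?_⟩
    · intro f₁ h₁ f₂ h₂ heq
      rw [← hleft f₁ h₁, ← hleft f₂ h₂, heq]
    · intro h hh
      refine ⟨gammaAct β (𝒦.inv κ) h, ?_, hright h hh⟩
      exact hMaps (𝒦.inv κ) (by rw [Eset_congr α β 𝒜 hinv1]; exact hh)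
  -- Part 5 : `γ_k` is additive and multiplicative
  have part5 : ∀ κ, ∀ f₁ ∈ Eset α β 𝒜 (𝒦.inv κ), ∀ f₂ ∈ Eset α β 𝒜 (𝒦.inv κ),
      gammaAct β κ (f₁ + f₂) = gammaAct β κ f₁ + gammaAct β κ f₂ ∧
      gammaAct β κ (smashMul α f₁ f₂)
        = smashMul α (gammaAct β κ f₁) (gammaAct β κ f₂) := by
    intro κ f₁ h₁ f₂ h₂
    refine ⟨gammaAct_add β κ f₁ f₂, ?_⟩
    calc
      gammaAct β κ (smashMul α f₁ f₂)
          = ∑ p ∈ f₁.support, ∑ q ∈ f₂.support,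
              gammaAct β κ (smashMul α (Finsupp.single p (f₁ p))
                (Finsupp.single q (f₂ q))) := by
            conv_lhs => rw [finsupp_eq_sum_single f₁, finsupp_eq_sum_single f₂]
            rw [smashMul_sum_left, gammaAct_finset_sum]
            apply Finset.sum_congr rfl
            intro p _
            rw [smashMul_sum_right, gammaAct_finset_sum]
        _ = ∑ p ∈ f₁.support, ∑ q ∈ f₂.support,
              smashMul α (gammaAct β κ (Finsupp.single p (f₁ p)))
                (gammaAct β κ (Finsupp.single q (f₂ q))) := by
            apply Finset.sum_congr rfl
            intro p hp
            apply Finset.sum_congr rfl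
            intro q hq
            exact gamma_mul_single hc κ p q _ _
              (h₁.2 p (Finsupp.mem_support_iff.1 hp))
              (h₂.2 q (Finsupp.mem_support_iff.1 hq))
              ((h₂.1 q).2 (Finsupp.mem_support_iff.1 hq))
        _ = smashMul α (gammaAct β κ f₁) (gammaAct β κ f₂) := by
            conv_rhs => rw [finsupp_eq_sum_single f₁, finsupp_eq_sum_single f₂]
            rw [gammaAct_finset_sum, gammaAct_finset_sum, smashMul_sum_left]
            apply Finset.sum_congr rfl
            intro p _
            rw [smashMul_sum_right]
  -- Part 10 : direct sum decomposition
  have part10 : ∀ f ∈ smashSet α 𝒜, ∃! c : K → ((G × X) →₀ A),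
      (Function.support c).Finite ∧
      (∀ p, 𝒦.obj p → c p ∈ Eset α β 𝒜 p) ∧
      (∀ p, ¬ 𝒦.obj p → c p = 0) ∧
      f = ∑ᶠ p, c p := by
    intro f hf
    set ε : X → K := fun x => (hsplitβ x).choose with hεdef
    have hεs : ∀ x : X, (𝒦.obj (ε x) ∧ x ∈ β.car (ε x)) ∧
        ∀ y, (𝒦.obj y ∧ x ∈ β.car y) → y = ε x := fun x => (hsplitβ x).choose_spec
    set c : K → ((G × X) →₀ A) := fun p => f.filter (fun q : G × X => ε q.2 = p) with hcdef
    have hcapp : ∀ p q, c p q = if ε q.2 = p then f q else 0 := by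
      intro p q
      rw [hcdef]
      exact Finsupp.filter_apply _ _ q
    have hcne : ∀ p q, c p q ≠ 0 → ε q.2 = p ∧ f q ≠ 0 := by
      intro p q h
      rw [hcapp] at h
      by_cases he : ε q.2 = p
      · exact ⟨he, by simpa [he] using h⟩
      · simp [he] at h
    have hsubc : Function.support c ⊆ ↑(f.support.image fun q => ε q.2) := by
      intro p hp
      rw [Function.mem_support] at hp
      obtain ⟨q, hq⟩ := Finsupp.ne_iff.1 hp
      have hq0 : c p q ≠ 0 := by simpa using hq
      obtain ⟨he, hf0⟩ := hcne p q hq0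
      exact Finset.mem_coe.2 (Finset.mem_image.2 ⟨q, Finsupp.mem_support_iff.2 hf0, he⟩)
    have hsupc : (Function.support c).Finite :=
      Set.Finite.subset (Finset.finite_toSet _) hsubc
    have hcmem : ∀ p, 𝒦.obj p → c p ∈ Eset α β 𝒜 p := by
      intro p _
      constructor
      · intro q
        constructor
        · rw [hcapp]
          split_ifs
          · exact (hf q).1
          · exact Submodule.zero_mem _
        · intro hne
          obtain ⟨he, hf0⟩ := hcne p q hne
          exact (hf q).2 hf0
      · intro q hne
        obtain ⟨he, hf0⟩ := hcne p q hne
        exact he ▸ (hεs q.2).1.2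
    have hczero : ∀ p, ¬ 𝒦.obj p → c p = 0 := by
      intro p hp
      ext q
      have hne : ε q.2 ≠ p := fun h => hp (h ▸ (hεs q.2).1.1)
      rw [hcapp, if_neg hne, Finsupp.coe_zero, Pi.zero_apply]
    have hsum : f = ∑ᶠ p, c p := by
      rw [finsum_eq_sum_of_support_subset c hsubc]
      ext q
      rw [Finsupp.finset_sum_apply]
      have hterm : ∀ p ∈ f.support.image (fun q => ε q.2),
          c p q = if ε q.2 = p then f q else 0 := fun p _ => hcapp p q
      rw [Finset.sum_congr rfl hterm, Finset.sum_ite_eq]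
      by_cases h0 : f q = 0
      · simp [h0]
      · rw [if_pos (Finset.mem_image.2 ⟨q, Finsupp.mem_support_iff.2 h0, rfl⟩)]
    refine ⟨c, ⟨hsupc, hcmem, hczero, hsum⟩, ?_⟩
    rintro c' ⟨hfin', hobj', hnobj', hsum'⟩
    have key : ∀ q : G × X, f q = c' (ε q.2) q := by
      intro q
      have hsub' : Function.support c' ⊆ ↑hfin'.toFinset := by
        rw [Set.Finite.coe_toFinset]
      rw [finsum_eq_sum_of_support_subset c' hsub'] at hsum'
      have happ : f q = ∑ p ∈ hfin'.toFinset, c' p q := by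
        rw [hsum', Finsupp.finset_sum_apply]
      have hz : ∀ p ∈ hfin'.toFinset, p ≠ ε q.2 → c' p q = 0 := by
        intro p _ hne
        by_cases hop : 𝒦.obj p
        · by_contra h0
          exact hne ((hεs q.2).2 p ⟨hop, (hobj' p hop).2 q h0⟩)
        · rw [hnobj' p hop, Finsupp.coe_zero, Pi.zero_apply]
      by_cases hmem : ε q.2 ∈ hfin'.toFinset
      · rw [happ, Finset.sum_eq_single_of_mem _ hmem hz]
      · have h1 : c' (ε q.2) = 0 := by
          by_contra h0
          exact hmem (hfin'.mem_toFinset.2 (Function.mem_support.2 h0))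
        rw [happ, Finset.sum_eq_zero (fun p hp => hz p hp (fun he => hmem (he ▸ hp))), h1,
          Finsupp.coe_zero, Pi.zero_apply]
    funext p
    ext q
    by_cases hep : ε q.2 = p
    · rw [hcapp, if_pos hep, ← hep]
      exact (key q).symm
    · rw [hcapp, if_neg hep]
      by_cases hop : 𝒦.obj p
      · by_contra h0
        exact hep ((hεs q.2).2 p ⟨hop, (hobj' p hop).2 q h0⟩).symm
      · rw [hnobj' p hop, Finsupp.coe_zero, Pi.zero_apply]
  refine ⟨part1, part2, part3, part4, ?_, ?_, ?_, ?_, ?_, part10⟩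
  · exact fun κ f₁ h₁ f₂ h₂ => part5 κ f₁ h₁ f₂ h₂
  · exact fun cc κ f _ => gammaAct_smul β κ cc f
  · intro p hp f hf
    exact gamma_obj_id β p hp f (fun q hq => hf.2 q (Finsupp.mem_support_iff.1 hq))
  · intro κ l hkl f hf
    apply gamma_comp β κ l hkl f
    intro q hq
    have hmem := hf.2 q (Finsupp.mem_support_iff.1 hq)
    rw [car_inv_eq, 𝒦.s_mul κ l hkl] at hmem
    rw [car_inv_eq]
    exact hmem
  · intro κ g a _ y hy
    rw [gammaAct_single β κ ((g, y) : G × X) a,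
      if_pos (show ((g, y) : G × X).2 ∈ β.car (𝒦.inv κ) from hy)]

end
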